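/- Let Φ be an irreducible reduced root system with a fixed choice of simple roots and corresponding dominance order ⪯ on the weight lattice X. If x and y are dominant weights with x ≺ y and y covers x in the dominance order restricted to dominant weights, then y − x is a positive root. -/

import Mathlib

open scoped BigOperators

variable {V : Type*} [NormedAddCommGroup V] [InnerProductSpace ℝ V]

/-- The pairing `⟨x, y^∨⟩ = 2(x,y)/(y,y)` of `x` with the coroot of `y`. -/
noncomputable def pairing (x y : V) : ℝ := 2 * (inner ℝ x y : ℝ) / (inner ℝ y y : ℝ)

/-- An irreducible, reduced, crystallographic root system in a Euclidean space `V`. -/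
structure RootSystemData (V : Type*) [NormedAddCommGroup V] [InnerProductSpace ℝ V] :
    Type _ where
  Δ : Set V
  finite : Δ.Finite
  nonzero : ∀ α ∈ Δ, α ≠ 0
  spanning : Submodule.span ℝ Δ = ⊤
  neg_mem : ∀ α ∈ Δ, -α ∈ Δ
  reduced : ∀ α ∈ Δ, ∀ c : ℝ, c • α ∈ Δ → c = 1 ∨ c = -1
  crystallographic : ∀ α ∈ Δ, ∀ β ∈ Δ, ∃ n : ℤ, pairing α β = n
  reflect_mem : ∀ α ∈ Δ, ∀ β ∈ Δ, β - pairing β α • α ∈ Δ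
  irreducible : ∀ s t : Set V, s ∪ t = Δ →
    (∀ α ∈ s, ∀ β ∈ t, (inner ℝ α β : ℝ) = 0) → s = ∅ ∨ t = ∅

variable {R : RootSystemData V}

/-- A base (system of simple roots) of the root system, corresponding to a Weyl chamber. -/
structure Base (R : RootSystemData V) where
  S : Finset V
  subset : ↑S ⊆ R.Δ
  indep : LinearIndependent ℝ ((↑) : {x : V // x ∈ S} → V)
  decomp : ∀ α ∈ R.Δ, ∃ c : V → ℤ, α = ∑ β ∈ S, (c β : ℝ) • β ∧
    ((∀ β ∈ S, 0 ≤ c β) ∨ (∀ β ∈ S, c β ≤ 0))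

/-- `x` is dominant with respect to the chamber given by the base `B`. -/
def IsDominant (B : Base R) (x : V) : Prop := ∀ α ∈ B.S, 0 ≤ pairing x α

/-- `β` is a positive root with respect to the base `B`. -/
def Base.IsPos (B : Base R) (β : V) : Prop :=
  β ∈ R.Δ ∧ ∃ c : V → ℕ, β = ∑ α ∈ B.S, (c α : ℝ) • α

/-- The dominance order: `y - x` is a nonnegative integer combination of simple roots. -/
def domLE (B : Base R) (x y : V) : Prop :=
  ∃ c : V → ℕ, y - x = ∑ α ∈ B.S, (c α : ℝ) • α

/-- `x` is a weight: its pairing with every coroot is an integer. -/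
def IsWeight (R : RootSystemData V) (x : V) : Prop :=
  ∀ α ∈ R.Δ, ∃ n : ℤ, pairing x α = n

/-- An ample (`T`-equivariant ample) polytope for the toric variety of the Weyl fan:
vertices `μ B` indexed by Weyl chambers (equivalently, bases `B`), such that vertices at
adjacent chambers differ by a positive integer multiple of the separating root. The chamber
adjacent to `B` across the wall of the simple root `α ∈ B.S` is the one whose base is the
reflection `s_α(B)`. -/
structure AmplePolytope (R : RootSystemData V) where
  μ : Base R → V
  weight : ∀ B : Base R, IsWeight R (μ B)
  ample : ∀ B B' : Base R, ∀ α ∈ B.S,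
    (∀ β : V, β ∈ B'.S ↔ ∃ γ ∈ B.S, β = γ - pairing γ α • α) →
    ∃ r : ℤ, 0 < r ∧ μ B - μ B' = (r : ℝ) • α

/-- The polytope `P` itself: the convex hull of its vertices. -/
noncomputable def AmplePolytope.carrier (P : AmplePolytope R) : Set V :=
  convexHull ℝ (Set.range P.μ)

/-- The root lattice `Y`. -/
def rootLattice (R : RootSystemData V) : AddSubgroup V := AddSubgroup.closure R.Δ

/-- `Λ(P)`: the lattice points of `P` lying in the coset `Y + μ_σ` of the root lattice. -/
noncomputable def latticePts (P : AmplePolytope R) : Set V :=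
  {x | x ∈ P.carrier ∧ ∀ B : Base R, x - P.μ B ∈ rootLattice R}

/-- The polytope is special: each vertex is dominant for its own chamber. -/
def IsSpecial (P : AmplePolytope R) : Prop := ∀ B : Base R, ∀ α ∈ B.S, 0 ≤ pairing (P.μ B) α

/-- One step of the numbers game: firing the vertex corresponding to the simple root `α`
replaces `x` by its reflection `x - ⟨x, α^∨⟩ α`. -/
noncomputable def fireRoot (x α : V) : V := x - pairing x α • α

/-- The result of playing the firing sequence `l` starting from `x`. -/
noncomputable def playRes (x : V) (l : List V) : V := l.foldl fireRoot x

/-- Legality of a firing sequence for the usual numbers game: each fired simple root has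
negative amplitude when fired. -/
def NGLegal (B : Base R) : V → List V → Prop
  | _, [] => True
  | x, α :: t => α ∈ B.S ∧ pairing x α < 0 ∧ NGLegal B (fireRoot x α) t

/-- A configuration is allowed in the numbers game with a cutoff: all amplitudes `≥ -1`. -/
def AllowedConf (B : Base R) (x : V) : Prop := ∀ α ∈ B.S, -1 ≤ pairing x α

/-- Legality for the numbers game with a cutoff: fired amplitudes are negative, and every
configuration along the way (including the first and last) is allowed. -/
def CutoffLegal (B : Base R) : V → List V → Prop
  | x, [] => AllowedConf B x
  | x, α :: t => AllowedConf B x ∧ α ∈ B.S ∧ pairing x α < 0 ∧ CutoffLegal B (fireRoot x α) t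

/-- `x` is winning for the numbers game with a cutoff. -/
def CutoffWinning (B : Base R) (x : V) : Prop :=
  ∃ l : List V, CutoffLegal B x l ∧ IsDominant B (playRes x l)

/-- The winning criterion: `⟨x, β^∨⟩ ≥ -1` for all positive roots `β`. -/
def WinningCrit (B : Base R) (x : V) : Prop := ∀ β : V, B.IsPos β → -1 ≤ pairing x β

/-- `α` is `P`-progressive for `x`: either `x` is dominant and `α` has minimum length among
simple roots with `x + α ⪯ μ`, or `⟨x, α^∨⟩ ≤ -1`. -/
def Progressive (B : Base R) (P : AmplePolytope R) (x α : V) : Prop :=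
  α ∈ B.S ∧
    ((IsDominant B x ∧ domLE B (x + α) (P.μ B) ∧
        ∀ β ∈ B.S, domLE B (x + β) (P.μ B) → ‖α‖ ≤ ‖β‖) ∨
      pairing x α ≤ -1)

section AuxLemmas

open scoped RealInnerProductSpace Classical

lemma pairing_eq (x y : V) : pairing x y = 2 * ⟪x, y⟫ / ⟪y, y⟫ := rfl

lemma pairing_add_left (x z y : V) : pairing (x + z) y = pairing x y + pairing z y := by
  simp only [pairing_eq, inner_add_left]; ring

lemma pairing_sub_left (x z y : V) : pairing (x - z) y = pairing x y - pairing z y := by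
  simp only [pairing_eq, inner_sub_left]; ring

lemma pairing_sum_left {ι : Type*} (s : Finset ι) (f : ι → V) (y : V) :
    pairing (∑ i ∈ s, f i) y = ∑ i ∈ s, pairing (f i) y := by
  simp only [pairing_eq, sum_inner, Finset.mul_sum, Finset.sum_div]

lemma pairing_smul_left (c : ℝ) (x y : V) : pairing (c • x) y = c * pairing x y := by
  simp only [pairing_eq, real_inner_smul_left]; ring

lemma RootSystemData.inner_self_pos (R : RootSystemData V) {α : V} (hα : α ∈ R.Δ) :
    (0:ℝ) < ⟪α, α⟫ := by
  rw [real_inner_self_eq_norm_sq]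
  exact pow_pos (norm_pos_iff.mpr (R.nonzero α hα)) 2

lemma inner_neg_of_pairing_neg {x y : V} (hy : (0:ℝ) < ⟪y, y⟫) (h : pairing x y < 0) :
    ⟪x, y⟫ < 0 := by
  rw [pairing_eq, div_neg_iff] at h
  rcases h with ⟨_, h2⟩ | ⟨h1, _⟩
  · linarith
  · linarith

lemma pairing_nonpos_of_inner_nonpos {x y : V} (hy : (0:ℝ) < ⟪y, y⟫)
    (h : ⟪x, y⟫ ≤ 0) : pairing x y ≤ 0 := by
  rw [pairing_eq]
  exact div_nonpos_iff.mpr (Or.inr ⟨by linarith, le_of_lt hy⟩)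

/-- If the pairings of two roots multiply to at least 4, the roots are proportional. -/
lemma eq_or_eq_neg_of_pairing_mul_ge {R : RootSystemData V} {β γ : V}
    (hβ : β ∈ R.Δ) (hγ : γ ∈ R.Δ) (h4 : (4:ℝ) ≤ pairing β γ * pairing γ β) :
    γ = β ∨ γ = -β := by
  have hββ := R.inner_self_pos hβ
  have hγγ := R.inner_self_pos hγ
  have hcomm : ⟪γ, β⟫ = ⟪β, γ⟫ := real_inner_comm _ _
  have hprod : pairing β γ * pairing γ β * (⟪β, β⟫ * ⟪γ, γ⟫)
      = 4 * (⟪β, γ⟫ * ⟪β, γ⟫) := by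
    rw [pairing_eq, pairing_eq, hcomm]
    field_simp
    ring
  have hsq : ⟪β, β⟫ * ⟪γ, γ⟫ ≤ ⟪β, γ⟫ * ⟪β, γ⟫ := by
    nlinarith [mul_pos hββ hγγ]
  have hcs := real_inner_mul_inner_self_le β γ
  have heqq : |⟪β, γ⟫ / (‖β‖ * ‖γ‖)| = 1 := by
    have hb : ⟪β, β⟫ = ‖β‖ * ‖β‖ := real_inner_self_eq_norm_mul_norm β
    have hg : ⟪γ, γ⟫ = ‖γ‖ * ‖γ‖ := real_inner_self_eq_norm_mul_norm γ
    have hbn : (0:ℝ) < ‖β‖ := norm_pos_iff.mpr (R.nonzero β hβ)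
    have hgn : (0:ℝ) < ‖γ‖ := norm_pos_iff.mpr (R.nonzero γ hγ)
    have heq : ⟪β, γ⟫ * ⟪β, γ⟫ = (‖β‖ * ‖γ‖) * (‖β‖ * ‖γ‖) := by nlinarith
    rw [abs_div, abs_of_pos (mul_pos hbn hgn)]
    rw [div_eq_one_iff_eq (ne_of_gt (mul_pos hbn hgn))]
    have hle := abs_real_inner_le_norm β γ
    have hge : ‖β‖ * ‖γ‖ ≤ |⟪β, γ⟫| := by
      nlinarith [abs_mul_abs_self ⟪β, γ⟫, abs_nonneg ⟪β, γ⟫]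
    linarith
  obtain ⟨-, r, hr0, hr⟩ := (abs_real_inner_div_norm_mul_norm_eq_one_iff β γ).mp heqq
  rcases R.reduced β hβ r (hr ▸ hγ) with h1 | h1
  · left; rw [hr, h1, one_smul]
  · right; rw [hr, h1, neg_smul, one_smul]

lemma Base.coeff_eq_zero {R : RootSystemData V} (B : Base R) {f : V → ℝ}
    (h : ∑ α ∈ B.S, f α • α = 0) : ∀ α ∈ B.S, f α = 0 := by
  intro α hα
  have h2 : ∑ i : {x : V // x ∈ B.S}, f (i : V) • (i : V) = 0 := by
    rw [Finset.sum_coe_sort B.S (fun v => f v • v)]; exact h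
  have := Fintype.linearIndependent_iff.mp B.indep (fun i => f (i : V)) h2
  exact this ⟨α, hα⟩

lemma Base.coeff_unique {R : RootSystemData V} (B : Base R) {f g : V → ℝ}
    (h : ∑ α ∈ B.S, f α • α = ∑ α ∈ B.S, g α • α) : ∀ α ∈ B.S, f α = g α := by
  intro α hα
  have h0 : ∑ α ∈ B.S, (f α - g α) • α = 0 := by
    simp only [sub_smul, Finset.sum_sub_distrib, h, sub_self]
  have := B.coeff_eq_zero h0 α hα
  linarith

lemma sum_ite_single_smul (s : Finset V) {γ : V} (hγ : γ ∈ s) :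
    ∑ v ∈ s, (if v = γ then (1:ℝ) else 0) • v = γ := by
  rw [Finset.sum_congr rfl (fun v _ => by rw [ite_smul, one_smul, zero_smul])]
  rw [Finset.sum_ite_eq' s γ (fun v => v)]
  simp [hγ]

/-- Distinct simple roots have nonpositive inner product. -/
lemma Base.inner_nonpos {R : RootSystemData V} (B : Base R) {α β : V}
    (hα : α ∈ B.S) (hβ : β ∈ B.S) (hne : α ≠ β) : ⟪α, β⟫ ≤ 0 := by
  by_contra hpos
  push_neg at hpos
  have hαΔ : α ∈ R.Δ := B.subset hα
  have hβΔ : β ∈ R.Δ := B.subset hβ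
  have hαα := R.inner_self_pos hαΔ
  have hββ := R.inner_self_pos hβΔ
  obtain ⟨n, hn⟩ := R.crystallographic α hαΔ β hβΔ
  obtain ⟨m, hm⟩ := R.crystallographic β hβΔ α hαΔ
  have hcomm : ⟪β, α⟫ = ⟪α, β⟫ := real_inner_comm _ _
  have hn_pos : 0 < pairing α β := by
    rw [pairing_eq]; positivity
  have hm_pos : 0 < pairing β α := by
    rw [pairing_eq, hcomm]; positivity
  have hn1 : (1:ℝ) ≤ pairing α β := by
    rw [hn] at hn_pos ⊢; exact_mod_cast Int.cast_pos.mp (by exact_mod_cast hn_pos)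
  have hm1 : (1:ℝ) ≤ pairing β α := by
    rw [hm] at hm_pos ⊢; exact_mod_cast Int.cast_pos.mp (by exact_mod_cast hm_pos)
  -- If both pairings are ≥ 2, roots are proportional : contradiction
  have hnot4 : ¬ ((4:ℝ) ≤ pairing α β * pairing β α) := by
    intro h4
    rcases eq_or_eq_neg_of_pairing_mul_ge hαΔ hβΔ h4 with h | h
    · exact hne h.symm
    · rw [h, inner_neg_right] at hpos; linarith
  -- hence pairing α β = 1 or pairing β α = 1
  have hone : pairing α β = 1 ∨ pairing β α = 1 := by
    by_contra hcon
    push_neg at hcon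
    have hn2 : (2:ℝ) ≤ pairing α β := by
      rw [hn] at hcon hn1 ⊢
      have : (1:ℤ) ≤ n := by exact_mod_cast hn1
      have : n ≠ 1 := fun hh => hcon.1 (by rw [hh]; norm_num)
      have : (2:ℤ) ≤ n := by omega
      exact_mod_cast this
    have hm2 : (2:ℝ) ≤ pairing β α := by
      rw [hm] at hcon hm1 ⊢
      have h1' : (1:ℤ) ≤ m := by exact_mod_cast hm1
      have : m ≠ 1 := fun hh => hcon.2 (by rw [hh]; norm_num)
      have : (2:ℤ) ≤ m := by omega
      exact_mod_cast this
    exact hnot4 (by nlinarith)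
  -- in either case we get a root which is a difference of two simple roots
  have hδ : α - β ∈ R.Δ ∨ β - α ∈ R.Δ := by
    rcases hone with h1 | h1
    · left
      have := R.reflect_mem β hβΔ α hαΔ
      rw [h1, one_smul] at this
      exact this
    · right
      have := R.reflect_mem α hαΔ β hβΔ
      rw [h1, one_smul] at this
      exact this
  -- but such a root has mixed-sign coefficients: contradiction
  have key : ∀ u v : V, u ∈ B.S → v ∈ B.S → u ≠ v → u - v ∉ R.Δ := by
    intro u v hu hv huv hmem
    obtain ⟨c, hc, hsign⟩ := B.decomp (u - v) hmem
    have hrepr : u - v = ∑ w ∈ B.S,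
        ((if w = u then (1:ℝ) else 0) + (if w = v then (-1:ℝ) else 0)) • w := by
      simp only [add_smul, Finset.sum_add_distrib, sum_ite_single_smul B.S hu]
      have : ∑ w ∈ B.S, (if w = v then (-1:ℝ) else 0) • w = -v := by
        rw [Finset.sum_congr rfl (fun w _ => by rw [ite_smul, neg_one_smul, zero_smul])]
        rw [Finset.sum_ite_eq' B.S v (fun w => -w)]
        simp [hv]
      rw [this]; abel
    have huniq := B.coeff_unique (hc.symm.trans hrepr)
    have hcu : (c u : ℝ) = 1 := by
      have := huniq u hu
      simpa [huv] using this
    have hcv : (c v : ℝ) = -1 := by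
      have := huniq v hv
      simpa [Ne.symm huv] using this
    have hcu' : c u = 1 := by exact_mod_cast hcu
    have hcv' : c v = -1 := by exact_mod_cast hcv
    rcases hsign with hs | hs
    · have := hs v hv; omega
    · have := hs u hu; omega
  rcases hδ with h | h
  · exact key α β hα hβ hne h
  · exact key β α hβ hα (Ne.symm hne) h

/-- Root-string lemma: if two non-opposite roots have negative inner product,
their sum is a root. -/
lemma root_add_mem {R : RootSystemData V} {β γ : V} (hβ : β ∈ R.Δ) (hγ : γ ∈ R.Δ)
    (hne : β ≠ -γ) (hin : ⟪β, γ⟫ < 0) : β + γ ∈ R.Δ := by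
  have hββ := R.inner_self_pos hβ
  have hγγ := R.inner_self_pos hγ
  obtain ⟨n, hn⟩ := R.crystallographic β hβ γ hγ
  obtain ⟨m, hm⟩ := R.crystallographic γ hγ β hβ
  have hcomm : ⟪γ, β⟫ = ⟪β, γ⟫ := real_inner_comm _ _
  have hn_neg : pairing β γ < 0 := by
    rw [pairing_eq]
    exact div_neg_of_neg_of_pos (by linarith) hγγ
  have hm_neg : pairing γ β < 0 := by
    rw [pairing_eq, hcomm]
    exact div_neg_of_neg_of_pos (by linarith) hββ
  have hn1 : pairing β γ ≤ -1 := by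
    rw [hn] at hn_neg ⊢
    have : n < 0 := by exact_mod_cast hn_neg
    have : n ≤ -1 := by omega
    exact_mod_cast this
  have hm1 : pairing γ β ≤ -1 := by
    rw [hm] at hm_neg ⊢
    have : m < 0 := by exact_mod_cast hm_neg
    have : m ≤ -1 := by omega
    exact_mod_cast this
  have hnot4 : ¬ ((4:ℝ) ≤ pairing β γ * pairing γ β) := by
    intro h4
    rcases eq_or_eq_neg_of_pairing_mul_ge hβ hγ h4 with h | h
    · rw [h] at hin; linarith
    · exact hne (by rw [h, neg_neg])
  have hone : pairing β γ = -1 ∨ pairing γ β = -1 := by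
    by_contra hcon
    push_neg at hcon
    have hn2 : pairing β γ ≤ -2 := by
      rw [hn] at hcon hn1 ⊢
      have h1' : n ≤ -1 := by exact_mod_cast hn1
      have : n ≠ -1 := fun hh => hcon.1 (by rw [hh]; norm_num)
      have : n ≤ -2 := by omega
      exact_mod_cast this
    have hm2 : pairing γ β ≤ -2 := by
      rw [hm] at hcon hm1 ⊢
      have h1' : m ≤ -1 := by exact_mod_cast hm1
      have : m ≠ -1 := fun hh => hcon.2 (by rw [hh]; norm_num)
      have : m ≤ -2 := by omega
      exact_mod_cast this
    exact hnot4 (by nlinarith)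
  rcases hone with h1 | h1
  · have := R.reflect_mem γ hγ β hβ
    rw [h1] at this
    simpa [sub_eq_add_neg, neg_smul] using this
  · have := R.reflect_mem β hβ γ hγ
    rw [h1] at this
    rw [add_comm]
    simpa [sub_eq_add_neg, neg_smul] using this

end AuxLemmas
section MainLemmas

open scoped RealInnerProductSpace Classical

/-- Key induction: given a positive root `β` with `x + β ⪯ y`, we can grow `β` into a
positive root `β'` with `x + β'` dominant and `x + β' ⪯ y`. -/
lemma exists_dominant_root_step {R : RootSystemData V} (B : Base R) (x y : V)
    (hxd : IsDominant B x) (hyd : IsDominant B y) :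
    ∀ n : ℕ, ∀ β : V, ∀ d : V → ℕ,
      B.IsPos β → (y - (x + β) = ∑ α ∈ B.S, (d α : ℝ) • α) → (∑ α ∈ B.S, d α = n) →
      ∃ β', B.IsPos β' ∧ IsDominant B (x + β') ∧ domLE B (x + β') y := by
  intro n
  induction n using Nat.strong_induction_on with
  | _ n ih =>
    intro β d hpos hd hsum
    by_cases hdom : IsDominant B (x + β)
    · exact ⟨β, hpos, hdom, d, hd⟩
    obtain ⟨βΔ, b, hb⟩ := hpos
    rw [IsDominant] at hdom
    push_neg at hdom
    obtain ⟨γ, hγS, hγneg⟩ := hdom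
    have hγΔ : γ ∈ R.Δ := B.subset hγS
    have hγγ := R.inner_self_pos hγΔ
    have hβγ : pairing β γ < 0 := by
      have hadd := pairing_add_left x β γ
      have hx := hxd γ hγS
      linarith [hadd ▸ hγneg]
    have hinβγ : ⟪β, γ⟫ < 0 := inner_neg_of_pairing_neg hγγ hβγ
    have hne : β ≠ -γ := by
      intro h
      have h0 : ∑ α ∈ B.S, ((b α : ℝ) + (if α = γ then 1 else 0)) • α = 0 := by
        simp only [add_smul, Finset.sum_add_distrib, ← hb, sum_ite_single_smul B.S hγS]
        rw [h]; abel
      have hz := B.coeff_eq_zero h0 γ hγS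
      simp at hz
      have : (0:ℝ) ≤ (b γ : ℝ) := Nat.cast_nonneg _
      linarith
    have hβγΔ : β + γ ∈ R.Δ := root_add_mem βΔ hγΔ hne hinβγ
    have hdγ : 1 ≤ d γ := by
      by_contra hcon
      have hdγ0 : d γ = 0 := by omega
      have h1 : pairing (y - (x + β)) γ ≤ 0 := by
        rw [hd, pairing_sum_left]
        apply Finset.sum_nonpos
        intro α hα
        rw [pairing_smul_left]
        by_cases hαγ : α = γ
        · rw [hαγ, hdγ0]; simp
        · have hip := B.inner_nonpos hα hγS hαγ
          exact mul_nonpos_of_nonneg_of_nonpos (Nat.cast_nonneg _)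
            (pairing_nonpos_of_inner_nonpos hγγ hip)
      have h2 : 0 < pairing (y - (x + β)) γ := by
        rw [pairing_sub_left]
        have := hyd γ hγS
        linarith
      linarith
    have hposnew : B.IsPos (β + γ) := by
      refine ⟨hβγΔ, fun v => if v = γ then b v + 1 else b v, ?_⟩
      have hcast : ∀ α : V, (((if α = γ then b α + 1 else b α : ℕ)) : ℝ)
          = (b α : ℝ) + (if α = γ then 1 else 0) := by
        intro α; split_ifs <;> push_cast <;> ring
      rw [Finset.sum_congr rfl (fun α _ => by rw [hcast α])]
      simp only [add_smul, Finset.sum_add_distrib, ← hb, sum_ite_single_smul B.S hγS]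
    have hdnew : y - (x + (β + γ))
        = ∑ α ∈ B.S, (((if α = γ then d α - 1 else d α : ℕ)) : ℝ) • α := by
      have hcast : ∀ α : V, (((if α = γ then d α - 1 else d α : ℕ)) : ℝ)
          = (d α : ℝ) - (if α = γ then 1 else 0) := by
        intro α
        split_ifs with h
        · subst h; rw [Nat.cast_sub hdγ]; norm_num
        · ring
      rw [Finset.sum_congr rfl (fun α _ => by rw [hcast α])]
      simp only [sub_smul, Finset.sum_sub_distrib, ← hd, sum_ite_single_smul B.S hγS]
      abel
    have hlt : ∑ α ∈ B.S, (if α = γ then d α - 1 else d α) < n := by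
      rw [← hsum]
      refine Finset.sum_lt_sum (fun i _ => by split_ifs <;> omega) ⟨γ, hγS, ?_⟩
      split_ifs with hh
      · omega
      · exact absurd rfl hh
    exact ih _ hlt (β + γ) _ hposnew hdnew rfl

end MainLemmas
/-- If `x` and `y` are dominant weights with `x ≺ y` and `y` covers `x` in the
dominance order restricted to dominant weights, then `y - x` is a positive root. -/
theorem stmt0 {V : Type*} [NormedAddCommGroup V] [InnerProductSpace ℝ V]
    [FiniteDimensional ℝ V] {R : RootSystemData V} (B : Base R) (x y : V)
    (hxw : IsWeight R x) (hyw : IsWeight R y)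
    (hxd : IsDominant B x) (hyd : IsDominant B y)
    (hlt : domLE B x y ∧ x ≠ y)
    (hcov : ∀ t : V, IsDominant B t → domLE B x t → domLE B t y → t = x ∨ t = y) :
    B.IsPos (y - x) := by
  classical
  obtain ⟨⟨c, hc⟩, hne⟩ := hlt
  have hex : ∃ α₀ ∈ B.S, 1 ≤ c α₀ := by
    by_contra hcon
    push_neg at hcon
    have hall : ∀ α ∈ B.S, c α = 0 := fun α hα => by have := hcon α hα; omega
    have h0 : y - x = 0 := by
      rw [hc]
      exact Finset.sum_eq_zero fun α hα => by rw [hall α hα]; simp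
    exact hne (sub_eq_zero.mp h0).symm
  obtain ⟨α₀, hα₀S, hcα₀⟩ := hex
  have hα₀Δ := B.subset hα₀S
  have hpos0 : B.IsPos α₀ := by
    refine ⟨hα₀Δ, fun v => if v = α₀ then 1 else 0, ?_⟩
    have hcast : ∀ α : V, (((if α = α₀ then 1 else 0 : ℕ)) : ℝ)
        = (if α = α₀ then (1:ℝ) else 0) := by intro α; split_ifs <;> norm_num
    rw [Finset.sum_congr rfl (fun α _ => by rw [hcast α]),
      sum_ite_single_smul B.S hα₀S]
  have hd0 : y - (x + α₀)
      = ∑ α ∈ B.S, (((if α = α₀ then c α - 1 else c α : ℕ)) : ℝ) • α := by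
    have hcast : ∀ α : V, (((if α = α₀ then c α - 1 else c α : ℕ)) : ℝ)
        = (c α : ℝ) - (if α = α₀ then 1 else 0) := by
      intro α
      split_ifs with h
      · subst h; rw [Nat.cast_sub hcα₀]; norm_num
      · ring
    rw [Finset.sum_congr rfl (fun α _ => by rw [hcast α])]
    simp only [sub_smul, Finset.sum_sub_distrib, ← hc, sum_ite_single_smul B.S hα₀S]
    abel
  obtain ⟨β', hβ'pos, hβ'dom, hβ'le⟩ :=
    exists_dominant_root_step B x y hxd hyd _ α₀ _ hpos0 hd0 rfl
  have hxle : domLE B x (x + β') := by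
    obtain ⟨_, b', hb'⟩ := hβ'pos
    exact ⟨b', by rw [add_sub_cancel_left]; exact hb'⟩
  rcases hcov (x + β') hβ'dom hxle hβ'le with h | h
  · exact absurd (by rwa [add_eq_left] at h) (R.nonzero β' hβ'pos.1)
  · have hyx : y - x = β' := by rw [← h]; abel
    rw [hyx]
    exact hβ'pos
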